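/- (First-order optimality condition for the OCE and existence of a normalized subgradient selection, Equation (S222)) Let u be a utility function, P a probability mass function on a finite nonempty set S, M ≥ 0, g : S → ℝ with 0 ≤ g(s) ≤ M for all s, and λ* ∈ ℝ a point attaining the supremum defining OCE^u_P(g), i.e., OCE^u_P(g) = λ* + Σ_{s∈S} P(s)·u(g(s) − λ*). Then there exists Λ : S → ℝ such that: (i) for every s ∈ S, Λ(s) is a subgradient of u at g(s) − λ*, i.e., u(y) ≤ u(g(s) − λ*) + Λ(s)·(y − (g(s) − λ*)) for all y ∈ ℝ; (ii) Λ(s) ≥ 0 for all s; and (iii) Σ_{s∈S} P(s)·Λ(s) = 1. -/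

import Mathlib

open Set

namespace OCEAux

variable {u : ℝ → ℝ}

/-- Right "derivative" (sup of right slopes) of a function at `x`. -/
noncomputable def rD (u : ℝ → ℝ) (x : ℝ) : ℝ := sSup (slope u x '' Set.Ioi x)

/-- Left "derivative" (inf of left slopes) of a function at `x`. -/
noncomputable def lD (u : ℝ → ℝ) (x : ℝ) : ℝ := sInf (slope u x '' Set.Iio x)

lemma slope_anti (hc : ConcaveOn ℝ Set.univ u) (x : ℝ) {y z : ℝ}
    (hy : y ≠ x) (hz : z ≠ x) (hyz : y ≤ z) : slope u x z ≤ slope u x y :=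
  hc.slope_anti (Set.mem_univ x) ⟨Set.mem_univ y, hy⟩ ⟨Set.mem_univ z, hz⟩ hyz

lemma rset_ne (x : ℝ) : (slope u x '' Set.Ioi x).Nonempty :=
  ⟨slope u x (x + 1), ⟨x + 1, by simp, rfl⟩⟩

lemma lset_ne (x : ℝ) : (slope u x '' Set.Iio x).Nonempty :=
  ⟨slope u x (x - 1), ⟨x - 1, by simp, rfl⟩⟩

lemma rset_bdd (hc : ConcaveOn ℝ Set.univ u) (x : ℝ) : BddAbove (slope u x '' Set.Ioi x) := by
  refine ⟨slope u x (x - 1), ?_⟩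
  rintro _ ⟨z, hz, rfl⟩
  exact slope_anti hc x (by intro h; linarith) (ne_of_gt hz) (by linarith [(Set.mem_Ioi.mp hz).le, Set.mem_Ioi.mp hz])

lemma lset_bdd (hc : ConcaveOn ℝ Set.univ u) (x : ℝ) : BddBelow (slope u x '' Set.Iio x) := by
  refine ⟨slope u x (x + 1), ?_⟩
  rintro _ ⟨y, hy, rfl⟩
  exact slope_anti hc x (ne_of_lt hy) (by intro h; linarith)
    (by linarith [Set.mem_Iio.mp hy])

lemma slope_le_rD (hc : ConcaveOn ℝ Set.univ u) {x z : ℝ} (hz : x < z) :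
    slope u x z ≤ rD u x :=
  le_csSup (rset_bdd hc x) ⟨z, hz, rfl⟩

lemma lD_le_slope (hc : ConcaveOn ℝ Set.univ u) {x y : ℝ} (hy : y < x) :
    lD u x ≤ slope u x y :=
  csInf_le (lset_bdd hc x) ⟨y, hy, rfl⟩

lemma rD_nonneg (hc : ConcaveOn ℝ Set.univ u) (hm : Monotone u) (x : ℝ) : 0 ≤ rD u x := by
  refine le_trans ?_ (slope_le_rD hc (show x < x + 1 by linarith))
  rw [slope_def_field]
  apply div_nonneg <;> [skip; linarith]
  have := hm (show x ≤ x + 1 by linarith); linarith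

lemma rD_le_lD (hc : ConcaveOn ℝ Set.univ u) (x : ℝ) : rD u x ≤ lD u x := by
  refine csSup_le (rset_ne x) ?_
  rintro _ ⟨z, hz, rfl⟩
  refine le_csInf (lset_ne x) ?_
  rintro _ ⟨y, hy, rfl⟩
  exact slope_anti hc x (ne_of_lt hy) (ne_of_gt hz) (by linarith [Set.mem_Ioi.mp hz, Set.mem_Iio.mp hy])

lemma slope_mul (x y : ℝ) (hxy : y ≠ x) : slope u x y * (y - x) = u y - u x := by
  rw [slope_def_field]
  field_simp [sub_ne_zero.mpr hxy]

/-- Any `c` between the right and left derivative is a subgradient. -/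
lemma subgrad (hc : ConcaveOn ℝ Set.univ u) {x c : ℝ} (h1 : rD u x ≤ c) (h2 : c ≤ lD u x) :
    ∀ y : ℝ, u y ≤ u x + c * (y - x) := by
  intro y
  rcases lt_trichotomy y x with h | h | h
  · have hs : c ≤ slope u x y := h2.trans (lD_le_slope hc h)
    have := slope_mul (u := u) x y (ne_of_lt h)
    nlinarith [mul_le_mul_of_nonpos_right hs (show y - x ≤ 0 by linarith)]
  · simp [h]
  · have hs : slope u x y ≤ c := (slope_le_rD hc h).trans h1
    have := slope_mul (u := u) x y (ne_of_gt h)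
    nlinarith [mul_le_mul_of_nonneg_right hs (show 0 ≤ y - x by linarith)]

end OCEAux

/-- A utility function: nondecreasing, concave, `u 0 = 0`, and `u t ≤ t`. -/
def IsUtility (u : ℝ → ℝ) : Prop :=
  Monotone u ∧ ConcaveOn ℝ Set.univ u ∧ u 0 = 0 ∧ ∀ t : ℝ, u t ≤ t

/-- A probability mass function on a finite type. -/
def IsPMF {S : Type*} [Fintype S] (P : S → ℝ) : Prop :=
  (∀ s, 0 ≤ P s) ∧ ∑ s, P s = 1

/-- The optimized certainty equivalent of `g : S → ℝ` under the pmf `P`. -/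
noncomputable def OCE {S : Type*} [Fintype S] (u : ℝ → ℝ) (P : S → ℝ) (g : S → ℝ) : ℝ :=
  ⨆ lam : ℝ, (lam + ∑ s, P s * u (g s - lam))

/-- First-order optimality condition for the OCE: existence of a normalized
subgradient selection. -/
theorem oce_subgradient_selection {S : Type*} [Fintype S] [Nonempty S]
    (u : ℝ → ℝ) (hu : IsUtility u) (P : S → ℝ) (hP : IsPMF P)
    (M : ℝ) (hM : 0 ≤ M) (g : S → ℝ) (hg : ∀ s, g s ∈ Set.Icc (0:ℝ) M)
    (lamstar : ℝ)
    (hopt : OCE u P g = lamstar + ∑ s, P s * u (g s - lamstar)) :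
    ∃ Λ : S → ℝ,
      (∀ s, ∀ y : ℝ, u y ≤ u (g s - lamstar) + Λ s * (y - (g s - lamstar))) ∧
      (∀ s, 0 ≤ Λ s) ∧
      ∑ s, P s * Λ s = 1 := by
  obtain ⟨hm, hc, hu0, hub⟩ := hu
  obtain ⟨hP0, hP1⟩ := hP
  -- boundedness of the OCE objective
  have hBdd : BddAbove (Set.range fun lam : ℝ => lam + ∑ s, P s * u (g s - lam)) := by
    refine ⟨M, ?_⟩
    rintro _ ⟨lam, rfl⟩
    have h4 : ∑ s, P s * u (g s - lam) ≤ ∑ s, P s * (g s - lam) :=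
      Finset.sum_le_sum fun s _ => mul_le_mul_of_nonneg_left (hub _) (hP0 s)
    have h2 : ∑ s, P s * (g s - lam) = (∑ s, P s * g s) - lam := by
      simp [mul_sub, Finset.sum_sub_distrib, ← Finset.sum_mul, hP1]
    have h3 : ∑ s, P s * g s ≤ M := by
      calc ∑ s, P s * g s ≤ ∑ s, P s * M :=
            Finset.sum_le_sum fun s _ => mul_le_mul_of_nonneg_left (hg s).2 (hP0 s)
        _ = M := by rw [← Finset.sum_mul, hP1, one_mul]
    simp only
    linarith
  have hle : ∀ lam : ℝ, lam + ∑ s, P s * u (g s - lam)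
      ≤ lamstar + ∑ s, P s * u (g s - lamstar) := by
    intro lam
    have h2 : (⨆ lam : ℝ, (lam + ∑ s, P s * u (g s - lam)))
        = lamstar + ∑ s, P s * u (g s - lamstar) := hopt
    exact (le_ciSup hBdd lam).trans h2.le
  -- claim: 1 ≤ ∑ P s * lD
  have hB : 1 ≤ ∑ s, P s * OCEAux.lD u (g s - lamstar) := by
    refine le_of_forall_pos_le_add ?_
    intro ε hε
    have hch : ∀ s : S, ∃ y, y < g s - lamstar ∧
        slope u (g s - lamstar) y < OCEAux.lD u (g s - lamstar) + ε := by
      intro s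
      obtain ⟨_, ⟨y, hy, rfl⟩, hlt⟩ := exists_lt_of_csInf_lt (OCEAux.lset_ne _)
        (show OCEAux.lD u (g s - lamstar) < OCEAux.lD u (g s - lamstar) + ε by linarith)
      exact ⟨y, hy, hlt⟩
    choose y hy1 hy2 using hch
    set h : ℝ := Finset.univ.inf' Finset.univ_nonempty (fun s => (g s - lamstar) - y s) with hh
    have hhpos : 0 < h := by
      rw [hh, Finset.lt_inf'_iff]
      intro s _
      linarith [hy1 s]
    have hhle : ∀ s, h ≤ (g s - lamstar) - y s := fun s => Finset.inf'_le _ (Finset.mem_univ s)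
    have hslope : ∀ s : S, slope u (g s - lamstar) (g s - lamstar - h)
        < OCEAux.lD u (g s - lamstar) + ε := by
      intro s
      refine lt_of_le_of_lt ?_ (hy2 s)
      exact OCEAux.slope_anti hc _ (ne_of_lt (hy1 s)) (by intro h'; linarith)
        (by linarith [hhle s])
    have hk := hle (lamstar + h)
    have e1 : ∀ s ∈ Finset.univ, P s * u (g s - (lamstar + h))
        = P s * u (g s - lamstar)
          - P s * (slope u (g s - lamstar) (g s - lamstar - h) * h) := by
      intro s _
      have hsl := OCEAux.slope_mul (u := u) (g s - lamstar) (g s - lamstar - h)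
        (by intro h'; linarith)
      have e : g s - (lamstar + h) = g s - lamstar - h := by ring
      rw [e]
      linear_combination (-(P s)) * hsl
    rw [Finset.sum_congr rfl e1, Finset.sum_sub_distrib] at hk
    have e2 : ∑ s, P s * (slope u (g s - lamstar) (g s - lamstar - h) * h)
        = (∑ s, P s * slope u (g s - lamstar) (g s - lamstar - h)) * h := by
      rw [Finset.sum_mul]
      exact Finset.sum_congr rfl fun s _ => (mul_assoc _ _ _).symm
    rw [e2] at hk
    have hsum : (1:ℝ) ≤ ∑ s, P s * slope u (g s - lamstar) (g s - lamstar - h) := by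
      refine le_of_mul_le_mul_right ?_ hhpos
      linarith
    have hfin : ∑ s, P s * slope u (g s - lamstar) (g s - lamstar - h)
        ≤ (∑ s, P s * OCEAux.lD u (g s - lamstar)) + ε := by
      have e3 : ∑ s, P s * (OCEAux.lD u (g s - lamstar) + ε)
          = (∑ s, P s * OCEAux.lD u (g s - lamstar)) + ε := by
        simp [mul_add, Finset.sum_add_distrib, ← Finset.sum_mul, hP1]
      rw [← e3]
      exact Finset.sum_le_sum fun s _ => mul_le_mul_of_nonneg_left (hslope s).le (hP0 s)
    linarith
  -- claim: ∑ P s * rD ≤ 1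
  have hA : ∑ s, P s * OCEAux.rD u (g s - lamstar) ≤ 1 := by
    refine le_of_forall_pos_le_add ?_
    intro ε hε
    have hch : ∀ s : S, ∃ y, g s - lamstar < y ∧
        OCEAux.rD u (g s - lamstar) - ε < slope u (g s - lamstar) y := by
      intro s
      obtain ⟨_, ⟨y, hy, rfl⟩, hlt⟩ := exists_lt_of_lt_csSup (OCEAux.rset_ne _)
        (show OCEAux.rD u (g s - lamstar) - ε < OCEAux.rD u (g s - lamstar) by linarith)
      exact ⟨y, hy, hlt⟩
    choose y hy1 hy2 using hch
    set h : ℝ := Finset.univ.inf' Finset.univ_nonempty (fun s => y s - (g s - lamstar)) with hh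
    have hhpos : 0 < h := by
      rw [hh, Finset.lt_inf'_iff]
      intro s _
      linarith [hy1 s]
    have hhle : ∀ s, h ≤ y s - (g s - lamstar) := fun s => Finset.inf'_le _ (Finset.mem_univ s)
    have hslope : ∀ s : S, OCEAux.rD u (g s - lamstar) - ε
        < slope u (g s - lamstar) (g s - lamstar + h) := by
      intro s
      refine lt_of_lt_of_le (hy2 s) ?_
      exact OCEAux.slope_anti hc _ (by intro h'; linarith) (ne_of_gt (hy1 s))
        (by linarith [hhle s])
    have hk := hle (lamstar - h)
    have e1 : ∀ s ∈ Finset.univ, P s * u (g s - (lamstar - h))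
        = P s * u (g s - lamstar)
          + P s * (slope u (g s - lamstar) (g s - lamstar + h) * h) := by
      intro s _
      have hsl := OCEAux.slope_mul (u := u) (g s - lamstar) (g s - lamstar + h)
        (by intro h'; linarith)
      have e : g s - (lamstar - h) = g s - lamstar + h := by ring
      rw [e]
      linear_combination (-(P s)) * hsl
    rw [Finset.sum_congr rfl e1, Finset.sum_add_distrib] at hk
    have e2 : ∑ s, P s * (slope u (g s - lamstar) (g s - lamstar + h) * h)
        = (∑ s, P s * slope u (g s - lamstar) (g s - lamstar + h)) * h := by
      rw [Finset.sum_mul]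
      exact Finset.sum_congr rfl fun s _ => (mul_assoc _ _ _).symm
    rw [e2] at hk
    have hsum : ∑ s, P s * slope u (g s - lamstar) (g s - lamstar + h) ≤ 1 := by
      refine le_of_mul_le_mul_right ?_ hhpos
      linarith
    have hfin : (∑ s, P s * OCEAux.rD u (g s - lamstar)) - ε
        ≤ ∑ s, P s * slope u (g s - lamstar) (g s - lamstar + h) := by
      have e3 : ∑ s, P s * (OCEAux.rD u (g s - lamstar) - ε)
          = (∑ s, P s * OCEAux.rD u (g s - lamstar)) - ε := by
        simp [mul_sub, Finset.sum_sub_distrib, ← Finset.sum_mul, hP1]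
      rw [← e3]
      exact Finset.sum_le_sum fun s _ => mul_le_mul_of_nonneg_left (hslope s).le (hP0 s)
    linarith
  -- combine
  set R : S → ℝ := fun s => OCEAux.rD u (g s - lamstar) with hR
  set L : S → ℝ := fun s => OCEAux.lD u (g s - lamstar) with hL
  have hRL : ∀ s, R s ≤ L s := fun s => OCEAux.rD_le_lD hc _
  have hR0 : ∀ s, 0 ≤ R s := fun s => OCEAux.rD_nonneg hc hm _
  have hab : ∑ s, P s * R s ≤ ∑ s, P s * L s :=
    Finset.sum_le_sum fun s _ => mul_le_mul_of_nonneg_left (hRL s) (hP0 s)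
  rcases eq_or_lt_of_le hab with heq | hlt
  · refine ⟨R, fun s => OCEAux.subgrad hc le_rfl (hRL s), hR0, ?_⟩
    have : (1:ℝ) ≤ ∑ s, P s * R s := heq ▸ hB
    linarith
  · set t : ℝ := (1 - ∑ s, P s * R s) / (∑ s, P s * L s - ∑ s, P s * R s) with ht
    have hba : (∑ s, P s * L s - ∑ s, P s * R s) ≠ 0 := by linarith
    have htm : t * (∑ s, P s * L s - ∑ s, P s * R s) = 1 - ∑ s, P s * R s :=
      div_mul_cancel₀ _ hba
    have ht0 : 0 ≤ t := div_nonneg (by linarith) (by linarith)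
    have ht1 : t ≤ 1 := by
      rw [ht, div_le_one (by linarith)]
      linarith
    refine ⟨fun s => (1 - t) * R s + t * L s, ?_, ?_, ?_⟩
    · intro s
      refine OCEAux.subgrad hc ?_ ?_
      · show R s ≤ (1 - t) * R s + t * L s
        nlinarith [mul_le_mul_of_nonneg_left (hRL s) ht0]
      · show (1 - t) * R s + t * L s ≤ L s
        nlinarith [mul_le_mul_of_nonneg_left (hRL s) (show (0:ℝ) ≤ 1 - t by linarith)]
    · intro s
      show (0:ℝ) ≤ (1 - t) * R s + t * L s
      nlinarith [mul_le_mul_of_nonneg_left (hRL s) ht0, hR0 s]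
    · have e : ∑ s, P s * ((1 - t) * R s + t * L s)
          = (1 - t) * (∑ s, P s * R s) + t * (∑ s, P s * L s) := by
        rw [Finset.mul_sum, Finset.mul_sum, ← Finset.sum_add_distrib]
        exact Finset.sum_congr rfl fun s _ => by ring
      rw [e]
      linear_combination htm
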